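/- Let G be a tournament on a set S of n elements, B-imperfect with respect to a total order π. Fix a pivot p ∈ S and let L = {s ∈ S \ {p} : (s,p) ∈ E} and R = {s ∈ S \ {p} : (p,s) ∈ E}. Let X be a sequence of distinct good elements of L that is increasing in π, and Y a sequence of distinct good elements of R that is increasing in π, and suppose M := |X| + |Y| − lcs(π_g, XY) > 0, where XY is the concatenation. Then the last ⌈M/2⌉ elements of X and the first ⌈M/2⌉ elements of Y pairwise form directed triangles with p; in particular, the number of directed triangles of G containing p is at least M²/4. -/

import Mathlib

/-- If `X` (in `L`) and `Y` (in `R`) are sorted sequences of distinct good elements whose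
concatenation loses at least `M > 0` w.r.t. the underlying order, then every element among
the last `⌈M/2⌉` of `X` and every element among the first `⌈M/2⌉` of `Y` forms a directed
triangle with the pivot `p`; in particular at least `M²/4` directed triangles contain `p`. -/
theorem stmt_4 {V : Type*} [Fintype V] [DecidableEq V] [LinearOrder V]
    (E : V → V → Prop) (B : Finset V)
    (htour : ∀ u v : V, u ≠ v → (E u v ↔ ¬ E v u))
    (himp : ∀ u v : V, u ≠ v → u ∉ B → v ∉ B → (E u v ↔ u < v))
    (p : V) (X Y : List V) (M : ℕ)
    (hX : ∀ x ∈ X, x ≠ p ∧ E x p ∧ x ∉ B)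
    (hY : ∀ y ∈ Y, y ≠ p ∧ E p y ∧ y ∉ B)
    (hXnd : X.Nodup) (hYnd : Y.Nodup)
    (hXsort : X.Pairwise (· < ·)) (hYsort : Y.Pairwise (· < ·))
    -- every subsequence of X ++ Y increasing in π has length ≤ |X| + |Y| - M
    (hM : ∀ l : List V, l.Sublist (X ++ Y) → l.Pairwise (· < ·) →
      l.length + M ≤ X.length + Y.length)
    (hMpos : 0 < M) :
    (∀ x ∈ X.drop (X.length - (M + 1) / 2), ∀ y ∈ Y.take ((M + 1) / 2),
      E x p ∧ E p y ∧ E y x) ∧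
    (M : ℝ) ^ 2 / 4 ≤
      (({q : V × V | E q.1 p ∧ E p q.2 ∧ E q.2 q.1} : Set (V × V)).ncard : ℝ) := by
  set k := (M + 1) / 2 with hk
  set d := X.length - k with hd
  -- bounds on lengths
  have hMY : M ≤ Y.length := by
    have := hM X (List.sublist_append_left X Y) hXsort
    omega
  have hMX : M ≤ X.length := by
    have := hM Y (List.sublist_append_right X Y) hYsort
    omega
  have hkM : k ≤ M := by omega
  have h2k : M ≤ 2 * k := by omega
  -- key: no x in the tail of X is below a y in the head of Y
  have key : ∀ x ∈ X.drop d, ∀ y ∈ Y.take k, ¬ x < y := by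
    intro x hx y hy hlt
    obtain ⟨i, hi, hxe⟩ := List.getElem_of_mem hx
    have hilen : i < X.length - d := by simpa using hi
    have hxe' : X[d + i]'(by omega) = x := by
      rw [← hxe]; simp [List.getElem_drop]
    obtain ⟨j, hj, hye⟩ := List.getElem_of_mem hy
    have hjlen : j < min k Y.length := by simpa using hj
    have hye' : Y[j]'(by omega) = y := by
      rw [← hye]; simp [List.getElem_take]
    have hXp := List.pairwise_iff_getElem.mp hXsort
    have hYp := List.pairwise_iff_getElem.mp hYsort
    set l := X.take (d + i + 1) ++ Y.drop j with hl
    have hsub : l.Sublist (X ++ Y) :=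
      (List.take_sublist _ _).append (List.drop_sublist _ _)
    have hsort : l.Pairwise (· < ·) := by
      rw [hl, List.pairwise_append]
      refine ⟨hXsort.sublist (List.take_sublist _ _),
        hYsort.sublist (List.drop_sublist _ _), ?_⟩
      intro a ha b hb
      obtain ⟨i', hi', ha'⟩ := List.getElem_of_mem ha
      have hi'len : i' < min (d + i + 1) X.length := by simpa using hi'
      have ha'' : X[i']'(by omega) = a := by rw [← ha']; simp [List.getElem_take]
      obtain ⟨j', hj', hb'⟩ := List.getElem_of_mem hb
      have hj'len : j' < Y.length - j := by simpa using hj'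
      have hb'' : Y[j + j']'(by omega) = b := by rw [← hb']; simp [List.getElem_drop]
      have hax : a ≤ x := by
        rcases eq_or_lt_of_le (Nat.lt_succ_iff.mp (by omega : i' < d + i + 1)) with h | h
        · rw [← ha'', ← hxe']; simp [h]
        · exact le_of_lt (ha'' ▸ hxe' ▸ hXp i' (d + i) (by omega) (by omega) h)
      have hyb : y ≤ b := by
        rcases Nat.eq_zero_or_pos j' with h | h
        · rw [← hb'', ← hye']; simp [h]
        · exact le_of_lt (hb'' ▸ hye' ▸ hYp j (j + j') (by omega) (by omega) (by omega))
      exact lt_of_le_of_lt hax (lt_of_lt_of_le hlt hyb)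
    have := hM l hsub hsort
    rw [hl] at this
    simp only [List.length_append, List.length_take, List.length_drop] at this
    omega
  -- first part
  have part1 : ∀ x ∈ X.drop d, ∀ y ∈ Y.take k, E x p ∧ E p y ∧ E y x := by
    intro x hx y hy
    have hxX : x ∈ X := List.mem_of_mem_drop hx
    have hyY : y ∈ Y := List.mem_of_mem_take hy
    obtain ⟨hxp, hExp, hxB⟩ := hX x hxX
    obtain ⟨hyp, hEpy, hyB⟩ := hY y hyY
    have hxy : x ≠ y := by
      rintro rfl
      exact ((htour x p hxp).mp hExp) hEpy
    refine ⟨hExp, hEpy, ?_⟩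
    by_contra hnE
    have hExy : E x y := (htour x y hxy).mpr hnE
    exact key x hx y hy ((himp x y hxy hxB hyB).mp hExy)
  refine ⟨part1, ?_⟩
  -- counting
  set A := X.drop d with hA
  set Bl := Y.take k with hBl
  have hAnd : A.Nodup := hXnd.sublist (List.drop_sublist _ _)
  have hBnd : Bl.Nodup := hYnd.sublist (List.take_sublist _ _)
  have hAlen : A.length = k := by simp [hA, hd]; omega
  have hBlen : Bl.length = k := by simp [hBl]; omega
  set S : Set (V × V) := {q : V × V | E q.1 p ∧ E p q.2 ∧ E q.2 q.1} with hS
  set F : Finset (V × V) := A.toFinset ×ˢ Bl.toFinset with hF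
  have hsub : (F : Set (V × V)) ⊆ S := by
    rintro ⟨a, b⟩ hab
    simp only [hF, Finset.coe_product, Set.mem_prod, List.coe_toFinset,
      Set.mem_setOf_eq] at hab
    obtain ⟨ha, hb⟩ := hab
    obtain ⟨h1, h2, h3⟩ := part1 a ha b hb
    exact ⟨h1, h2, h3⟩
  have hcard : F.card = k * k := by
    rw [hF, Finset.card_product, List.toFinset_card_of_nodup hAnd,
      List.toFinset_card_of_nodup hBnd, hAlen, hBlen]
  have hineq : k * k ≤ S.ncard := by
    rw [← hcard, ← Set.ncard_coe_finset]
    exact Set.ncard_le_ncard hsub (Set.toFinite S)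
  have hM2 : M ^ 2 ≤ 4 * (k * k) := by nlinarith
  have : (M : ℝ) ^ 2 ≤ 4 * ((k * k : ℕ) : ℝ) := by
    push_cast
    exact_mod_cast (by exact_mod_cast hM2 : ((M ^ 2 : ℕ) : ℝ) ≤ ((4 * (k * k) : ℕ) : ℝ))
  have hcast : ((k * k : ℕ) : ℝ) ≤ (S.ncard : ℝ) := by exact_mod_cast hineq
  linarith
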